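/- Let d ≥ 1 and let a, b ∈ ℝ^d with a_l < b_l for every coordinate l; set V = Icc a b (the closed rectangular box) with interior int(V) and topological boundary ∂V. Let q : ℝ^d → ℝ be continuous on V and differentiable on int(V), with q(x) > 0 for all x ∈ V, and let g : ℝ^d → ℝ^d be continuous on V and differentiable on int(V) with g(x') = 0 for every x' ∈ ∂V. Assume x ↦ Σ_{l=1}^d ( ∂_{x_l} q(x) · g_l(x) + q(x) · ∂_{x_l} g_l(x) ) is integrable on V. Then ∫_V Σ_{l=1}^d ( ∂_{x_l} q(x) g_l(x) + q(x) ∂_{x_l} g_l(x) ) dx = 0; equivalently, if q is a probability density supported on V, then E_{x∼q}[ Σ_{l=1}^d ( ∂_{x_l} log q(x) · g_l(x) + ∂_{x_l} g_l(x) ) ] = 0. -/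

import Mathlib

open MeasureTheory

/-- Stein's identity for truncated densities (Lemma 5.1) on a rectangular box
`V = Icc a b ⊆ ℝ^d`: for a positive density `q` and a vector field `g` vanishing on the
topological boundary of `V`,
`∫_V ∑ l (∂ₗ q(x) · gₗ(x) + q(x) · ∂ₗ gₗ(x)) dx = 0`. -/
theorem stein_identity_truncated_box
    {d : ℕ} (hd : 1 ≤ d) (a b : Fin d → ℝ) (hab : ∀ l, a l < b l)
    (V : Set (Fin d → ℝ)) (hV : V = Set.Icc a b)
    (q : (Fin d → ℝ) → ℝ) (g : (Fin d → ℝ) → Fin d → ℝ)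
    (hqc : ContinuousOn q V) (hqd : DifferentiableOn ℝ q (interior V))
    (hqpos : ∀ x ∈ V, 0 < q x)
    (hgc : ContinuousOn g V)
    (hgd : ∀ l, DifferentiableOn ℝ (fun y => g y l) (interior V))
    (hg0 : ∀ x ∈ frontier V, g x = 0)
    (hint : IntegrableOn
      (fun x => ∑ l, (fderiv ℝ q x (Pi.single l 1) * g x l
        + q x * fderiv ℝ (fun y => g y l) x (Pi.single l 1))) V volume) :
    ∫ x in V, (∑ l, (fderiv ℝ q x (Pi.single l 1) * g x l
        + q x * fderiv ℝ (fun y => g y l) x (Pi.single l 1))) ∂volume = 0 := by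
  subst hV
  obtain ⟨n, rfl⟩ : ∃ n, d = n + 1 := ⟨d - 1, (Nat.succ_pred_eq_of_pos hd).symm⟩
  -- interior of the box
  have hint_eq : interior (Set.Icc a b) = Set.pi Set.univ fun i => Set.Ioo (a i) (b i) := by
    rw [← Set.pi_univ_Icc, interior_pi_set Set.finite_univ]
    simp [interior_Icc]
  set f : Fin (n + 1) → (Fin (n + 1) → ℝ) → ℝ := fun i x => q x * g x i with hf
  set f' : Fin (n + 1) → (Fin (n + 1) → ℝ) → (Fin (n + 1) → ℝ) →L[ℝ] ℝ :=
    fun i x => q x • fderiv ℝ (fun y => g y i) x + g x i • fderiv ℝ q x with hf'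
  have key := integral_divergence_of_hasFDerivAt_off_countable' a b
    (fun i => (hab i).le) f f' ∅ Set.countable_empty
    (fun i => hqc.mul (continuousOn_pi.1 hgc i))
    ?_ ?_
  · -- conclude
    have hdiv : ∀ x, (∑ i, f' i x (Pi.single i 1)) =
        ∑ l, (fderiv ℝ q x (Pi.single l 1) * g x l
          + q x * fderiv ℝ (fun y => g y l) x (Pi.single l 1)) := by
      intro x
      refine Finset.sum_congr rfl fun i _ => ?_
      simp [hf', smul_eq_mul]
      ring
    rw [show (∫ x in Set.Icc a b, (∑ l, (fderiv ℝ q x (Pi.single l 1) * g x l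
        + q x * fderiv ℝ (fun y => g y l) x (Pi.single l 1))) ∂volume)
        = ∫ x in Set.Icc a b, ∑ i, f' i x (Pi.single i 1) ∂volume from by
      refine setIntegral_congr_fun measurableSet_Icc fun x _ => (hdiv x).symm]
    rw [key]
    refine Finset.sum_eq_zero fun i _ => ?_
    have hbd : ∀ (c : ℝ), c = a i ∨ c = b i → ∀ x ∈ Set.Icc (a ∘ i.succAbove) (b ∘ i.succAbove),
        f i (i.insertNth c x) = 0 := by
      intro c hc x hx
      have hmem : i.insertNth c x ∈ frontier (Set.Icc a b) := by
        have hIcc : i.insertNth c x ∈ Set.Icc a b := by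
          refine Fin.insertNth_mem_Icc.2 ⟨?_, hx⟩
          rcases hc with rfl | rfl
          · exact ⟨le_rfl, (hab i).le⟩
          · exact ⟨(hab i).le, le_rfl⟩
        rw [frontier, closure_eq_iff_isClosed.2 isClosed_Icc, hint_eq]
        refine ⟨hIcc, fun hmem => ?_⟩
        have := hmem i (Set.mem_univ i)
        simp only [Fin.insertNth_apply_same] at this
        rcases hc with rfl | rfl
        · exact lt_irrefl _ this.1
        · exact lt_irrefl _ this.2
      simp [hf, hg0 _ hmem]
    rw [setIntegral_congr_fun measurableSet_Icc (hbd (b i) (Or.inr rfl)),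
      setIntegral_congr_fun measurableSet_Icc (hbd (a i) (Or.inl rfl)),
      integral_zero, sub_self]
  · -- differentiability
    intro x hx i
    rw [Set.diff_empty] at hx
    have hxint : x ∈ interior (Set.Icc a b) := by rw [hint_eq]; exact hx
    have hopen : IsOpen (interior (Set.Icc a b)) := isOpen_interior
    have hq : HasFDerivAt q (fderiv ℝ q x) x :=
      ((hqd.differentiableAt (hopen.mem_nhds hxint)).hasFDerivAt)
    have hg : HasFDerivAt (fun y => g y i) (fderiv ℝ (fun y => g y i) x) x :=
      (((hgd i).differentiableAt (hopen.mem_nhds hxint)).hasFDerivAt)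
    exact hq.mul hg
  · -- integrability
    refine hint.congr_fun ?_ measurableSet_Icc
    intro x _
    refine Finset.sum_congr rfl fun i _ => ?_
    simp [hf', smul_eq_mul]
    ring
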